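/- arXiv:math/0507587 — 3 statements merged into one kernel-verified Lean document; each statement's English description precedes it below -/
import Mathlib

section
/- More generally, a cochain complex 0 → C⁰ → ⋯ → Cⁿ → 0 with dim C^i = k_i and dim H^i = b_i exists if and only if k - b := (k₀-b₀,…,kₙ-bₙ) is admissible (all entries nonnegative, alternating sum zero, all partial alternating sums nonnegative). -/
private lemma sSucc (c : ℕ → ℤ) (i : ℕ) :
    ∑ j ∈ Finset.range (i+2), (-1:ℤ)^(i+1+j) * c j
      = c (i+1) - ∑ j ∈ Finset.range (i+1), (-1:ℤ)^(i+j) * c j := by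
  rw [Finset.sum_range_succ]
  have h1 : (-1:ℤ)^(i+1+(i+1)) = 1 := by
    have h : i+1+(i+1) = 2*(i+1) := by ring
    rw [h, pow_mul]; norm_num
  have h2 : ∑ j ∈ Finset.range (i+1), (-1:ℤ)^(i+1+j) * c j
      = -∑ j ∈ Finset.range (i+1), (-1:ℤ)^(i+j) * c j := by
    rw [← Finset.sum_neg_distrib]
    apply Finset.sum_congr rfl
    intro j _
    have h : i+1+j = (i+j)+1 := by omega
    rw [h, pow_succ]; ring
  rw [h1, h2]; ring

private lemma sTotal (c : ℕ → ℤ) (n : ℕ) :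
    ∑ j ∈ Finset.range (n+1), (-1:ℤ)^(n+j) * c j
      = (-1:ℤ)^n * ∑ j ∈ Finset.range (n+1), (-1:ℤ)^j * c j := by
  rw [Finset.mul_sum]
  apply Finset.sum_congr rfl
  intro j _
  rw [pow_add]; ring

set_option synthInstance.maxHeartbeats 1000000 in
set_option maxHeartbeats 1000000 in
/-- A cochain complex `0 → ℂ^{k₀} → ⋯ → ℂ^{kₙ} → 0` with
`dim H^i = b i` exists iff `k - b` is admissible: all entries nonnegative
(`b i ≤ k i`), vanishing total alternating sum, and nonnegative partial
alternating sums. -/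
theorem statement3
    (n : ℕ) (k b : ℕ → ℕ) (hkn : ∀ q, n < q → k q = 0) (hbn : ∀ q, n < q → b q = 0) :
    (∃ d : ∀ q : ℕ, ((Fin (k q) → ℂ) →ₗ[ℂ] (Fin (k (q+1)) → ℂ)),
        (∀ q, (d (q+1)).comp (d q) = 0) ∧
        b 0 = Module.finrank ℂ ↥(LinearMap.ker (d 0)) ∧
        (∀ q, b (q+1) = Module.finrank ℂ
          (↥(LinearMap.ker (d (q+1))) ⧸
            (LinearMap.range (d q)).comap (LinearMap.ker (d (q+1))).subtype)))
    ↔ ((∀ i, b i ≤ k i) ∧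
        (∑ i ∈ Finset.range (n+1), (-1:ℤ)^i * ((k i : ℤ) - (b i : ℤ)) = 0) ∧
        ∀ i < n, 0 ≤ ∑ j ∈ Finset.range (i+1), (-1:ℤ)^(i+j) * ((k j : ℤ) - (b j : ℤ))) := by
  set c : ℕ → ℤ := fun i => (k i : ℤ) - (b i : ℤ) with hc
  constructor
  · rintro ⟨d, hdd, hb0, hbs⟩
    set ρ : ℕ → ℕ := fun q => Module.finrank ℂ ↥(LinearMap.range (d q)) with hρ
    -- rank-nullity for each q
    have hrn : ∀ q, ρ q + Module.finrank ℂ ↥(LinearMap.ker (d q)) = k q := by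
      intro q
      have := LinearMap.finrank_range_add_finrank_ker (d q)
      rwa [Module.finrank_fin_fun] at this
    -- k 0 = b 0 + ρ 0
    have hk0 : k 0 = b 0 + ρ 0 := by
      have := hrn 0
      omega
    -- k (q+1) = b (q+1) + ρ (q+1) + ρ q
    have hks : ∀ q, k (q+1) = b (q+1) + ρ (q+1) + ρ q := by
      intro q
      have hle : LinearMap.range (d q) ≤ LinearMap.ker (d (q+1)) :=
        LinearMap.range_le_ker_iff.mpr (hdd q)
      have hcomap : Module.finrank ℂ
          ↥((LinearMap.range (d q)).comap (LinearMap.ker (d (q+1))).subtype) = ρ q :=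
        (Submodule.comapSubtypeEquivOfLe hle).finrank_eq
      have hquot := Submodule.finrank_quotient_add_finrank
        ((LinearMap.range (d q)).comap (LinearMap.ker (d (q+1))).subtype)
      rw [hcomap, ← hbs q] at hquot
      have := hrn (q+1)
      omega
    -- ρ n = 0
    have hρn : ρ n = 0 := by
      have h1 : ρ n ≤ Module.finrank ℂ (Fin (k (n+1)) → ℂ) :=
        Submodule.finrank_le _
      rw [Module.finrank_fin_fun, hkn (n+1) (by omega)] at h1
      omega
    -- partial sums equal ranks
    have hS : ∀ i, ∑ j ∈ Finset.range (i+1), (-1:ℤ)^(i+j) * c j = (ρ i : ℤ) := by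
      intro i
      induction i with
      | zero =>
        have h0 : ∑ j ∈ Finset.range (0+1), (-1:ℤ)^(0+j) * c j = c 0 := by simp
        rw [h0, hc]
        simp only
        omega
      | succ i ih =>
        rw [sSucc c i, ih, hc]
        have := hks i
        push_cast
        omega
    refine ⟨?_, ?_, ?_⟩
    · intro i
      cases i with
      | zero => omega
      | succ q => have := hks q; omega
    · have h1 := hS n
      rw [sTotal] at h1
      have h2 : ((-1:ℤ)^n) ≠ 0 := by
        exact pow_ne_zero n (by norm_num)
      rw [hρn] at h1
      push_cast at h1
      exact (mul_eq_zero.mp h1).resolve_left h2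
    · intro i _
      rw [hS i]
      positivity
  · rintro ⟨h1, h2, h3⟩
    -- partial sums
    set S : ℕ → ℤ := fun i => ∑ j ∈ Finset.range (i+1), (-1:ℤ)^(i+j) * c j with hSdef
    have hSsucc : ∀ i, S (i+1) = c (i+1) - S i := fun i => sSucc c i
    have hSn : S n = 0 := by
      rw [hSdef]
      simp only
      rw [sTotal, h2, mul_zero]
    have hczero : ∀ i, n < i → c i = 0 := by
      intro i hi
      rw [hc]; simp [hkn i hi, hbn i hi]
    have hShigh : ∀ j, S (n + j) = 0 := by
      intro j
      induction j with
      | zero => simpa using hSn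
      | succ j ih =>
        have h : n + (j+1) = (n+j) + 1 := by omega
        rw [h, hSsucc, ih, hczero (n+j+1) (by omega)]
        ring
    have hSpos : ∀ i, 0 ≤ S i := by
      intro i
      rcases lt_or_ge i n with h | h
      · exact h3 i h
      · obtain ⟨j, rfl⟩ := Nat.exists_eq_add_of_le h
        rw [hShigh j]
    set r : ℕ → ℕ := fun i => (S i).toNat with hrdef
    have hrS : ∀ i, (r i : ℤ) = S i := fun i => Int.toNat_of_nonneg (hSpos i)
    have hk0 : k 0 = b 0 + r 0 := by
      have h := hrS 0
      have h0 : S 0 = c 0 := by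
        show ∑ j ∈ Finset.range (0+1), (-1:ℤ)^(0+j) * c j = c 0
        simp
      rw [h0, hc] at h
      simp only at h
      omega
    have hks : ∀ q, k (q+1) = b (q+1) + r (q+1) + r q := by
      intro q
      have h := hrS (q+1)
      rw [hSsucc q, ← hrS q, hc] at h
      push_cast at h
      omega
    have hbr : ∀ q, b q + r q ≤ k q := by
      intro q
      cases q with
      | zero => omega
      | succ p => have := hks p; omega
    -- the embeddings
    have hemb : ∀ q (i : Fin (r q)), b q + (i : ℕ) < k q := by
      intro q i
      have := hbr q
      omega
    have hinj : ∀ q (t : Fin (r q)), b (q+1) + r (q+1) + (t : ℕ) < k (q+1) := by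
      intro q t
      have := hks q
      omega
    set emb : ∀ q, Fin (r q) → Fin (k q) := fun q i => ⟨b q + i, hemb q i⟩ with hembdef
    set inj : ∀ q, Fin (r q) → Fin (k (q+1)) :=
      fun q t => ⟨b (q+1) + r (q+1) + t, hinj q t⟩ with hinjdef
    have hembInj : ∀ q, Function.Injective (emb q) := by
      intro q i j hij
      rw [hembdef] at hij
      simp only [Fin.mk.injEq] at hij
      exact Fin.ext (by omega)
    have hinjInj : ∀ q, Function.Injective (inj q) := by
      intro q i j hij
      rw [hinjdef] at hij
      simp only [Fin.mk.injEq] at hij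
      exact Fin.ext (by omega)
    set proj : ∀ q, (Fin (k q) → ℂ) →ₗ[ℂ] (Fin (r q) → ℂ) :=
      fun q => LinearMap.funLeft ℂ ℂ (emb q) with hprojdef
    set inc : ∀ q, (Fin (r q) → ℂ) →ₗ[ℂ] (Fin (k (q+1)) → ℂ) :=
      fun q => Function.ExtendByZero.linearMap ℂ (inj q) with hincdef
    set d : ∀ q : ℕ, ((Fin (k q) → ℂ) →ₗ[ℂ] (Fin (k (q+1)) → ℂ)) :=
      fun q => (inc q).comp (proj q) with hddef
    have hincInj : ∀ q, Function.Injective (inc q) := by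
      intro q x y hxy
      funext t
      have := congrFun hxy (inj q t)
      rw [hincdef] at this
      simp only [Function.ExtendByZero.linearMap_apply] at this
      rwa [(hinjInj q).extend_apply, (hinjInj q).extend_apply] at this
    have hprojSurj : ∀ q, Function.Surjective (proj q) :=
      fun q => LinearMap.funLeft_surjective_of_injective ℂ ℂ (emb q) (hembInj q)
    -- d ∘ d = 0
    have hdd : ∀ q, (d (q+1)).comp (d q) = 0 := by
      intro q
      have hpi : (proj (q+1)).comp (inc q) = 0 := by
        apply LinearMap.ext
        intro x
        funext i
        simp only [LinearMap.comp_apply, LinearMap.zero_apply, hprojdef, hincdef,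
          LinearMap.funLeft_apply, Function.ExtendByZero.linearMap_apply, Pi.zero_apply]
        apply Function.extend_apply'
        rintro ⟨t, ht⟩
        rw [hinjdef, hembdef] at ht
        simp only [Fin.mk.injEq] at ht
        have hi : (i : ℕ) < r (q+1) := i.isLt
        omega
      rw [hddef]
      simp only
      rw [LinearMap.comp_assoc, ← LinearMap.comp_assoc (proj q) (inc q) (proj (q+1)), hpi]
      simp
    -- kernels
    have hker : ∀ q, LinearMap.ker (d q) = LinearMap.ker (proj q) := by
      intro q
      rw [hddef]
      simp only
      rw [LinearMap.ker_comp, LinearMap.ker_eq_bot.mpr (hincInj q), Submodule.comap_bot]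
    have hkerdim : ∀ q, Module.finrank ℂ ↥(LinearMap.ker (d q)) + r q = k q := by
      intro q
      rw [hker q]
      have h := LinearMap.finrank_range_add_finrank_ker (proj q)
      rw [Module.finrank_fin_fun, LinearMap.range_eq_top.mpr (hprojSurj q),
        finrank_top, Module.finrank_fin_fun] at h
      omega
    -- ranges
    have hrangedim : ∀ q, Module.finrank ℂ ↥(LinearMap.range (d q)) = r q := by
      intro q
      rw [hddef]
      simp only
      rw [LinearMap.range_comp, LinearMap.range_eq_top.mpr (hprojSurj q), Submodule.map_top,
        LinearMap.finrank_range_of_inj (hincInj q), Module.finrank_fin_fun]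
    refine ⟨d, hdd, ?_, ?_⟩
    · have := hkerdim 0
      omega
    · intro q
      have hle : LinearMap.range (d q) ≤ LinearMap.ker (d (q+1)) :=
        LinearMap.range_le_ker_iff.mpr (hdd q)
      have hcomap : Module.finrank ℂ
          ↥((LinearMap.range (d q)).comap (LinearMap.ker (d (q+1))).subtype)
            = Module.finrank ℂ ↥(LinearMap.range (d q)) :=
        (Submodule.comapSubtypeEquivOfLe hle).finrank_eq
      have hquot := Submodule.finrank_quotient_add_finrank
        ((LinearMap.range (d q)).comap (LinearMap.ker (d (q+1))).subtype)
      rw [hcomap, hrangedim q] at hquot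
      have := hkerdim (q+1)
      have := hks q
      omega
end

section
/- The map π₀ : D_ac(k₀,…,kₙ) → Emb(ℂ^{k₀}, ℂ^{k₁}) sending an acyclic complex to its first differential d⁰ is surjective onto injective linear maps, and each fiber is in bijection with D_ac(k₁-k₀, k₂,…,kₙ) (acyclic complexes on the quotient ℂ^{k₁}/im d⁰ ≅ ℂ^{k₁-k₀}). -/
/-- The set `D_ac(k)` of acyclic cochain complexes `0 → ℂ^{k 0} → ℂ^{k 1} → ⋯`. -/
def Dac (k : ℕ → ℕ) : Type :=
  {d : ∀ q : ℕ, ((Fin (k q) → ℂ) →ₗ[ℂ] (Fin (k (q+1)) → ℂ)) //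
    (∀ q, (d (q+1)).comp (d q) = 0) ∧ LinearMap.ker (d 0) = ⊥ ∧
    (∀ q, LinearMap.ker (d (q+1)) = LinearMap.range (d q))}

/-! ### Auxiliary constructions -/

/-- The shifted dimension vector `(k₁ - k₀, k₂, k₃, …)`. -/
def shiftK (k : ℕ → ℕ) : ℕ → ℕ := fun i => if i = 0 then k 1 - k 0 else k (i+1)

lemma shiftK_zero (k : ℕ → ℕ) : shiftK k 0 = k 1 - k 0 := rfl
lemma shiftK_succ (k : ℕ → ℕ) (q : ℕ) : shiftK k (q+1) = k (q+2) := rfl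

/-- The model differential `(x, y) ↦ (y, 0)`. -/
noncomputable def Mmap (a b c : ℕ) : ((Fin a → ℂ) × (Fin b → ℂ)) →ₗ[ℂ] ((Fin b → ℂ) × (Fin c → ℂ)) :=
  (LinearMap.inl ℂ _ _).comp (LinearMap.snd ℂ _ _)

lemma Mmap_apply (a b c : ℕ) (z : (Fin a → ℂ) × (Fin b → ℂ)) :
    Mmap a b c z = (z.2, 0) := rfl

lemma Mmap_comp (a b c d : ℕ) : (Mmap b c d).comp (Mmap a b c) = 0 := by
  apply LinearMap.ext
  intro z
  simp [Mmap_apply]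

lemma ker_Mmap (a' a b c : ℕ) :
    LinearMap.ker (Mmap a b c) = LinearMap.range (Mmap a' a b) := by
  ext z
  simp only [LinearMap.mem_ker, LinearMap.mem_range, Mmap_apply]
  constructor
  · intro h
    have h2 : z.2 = 0 := congrArg Prod.fst h
    exact ⟨(0, z.1), Prod.ext rfl h2.symm⟩
  · rintro ⟨w, rfl⟩
    rfl

lemma ker_Mmap_zero (a b c : ℕ) (ha : a = 0) : LinearMap.ker (Mmap a b c) = ⊥ := by
  subst ha
  ext z
  simp only [LinearMap.mem_ker, Mmap_apply, Submodule.mem_bot]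
  constructor
  · intro h
    have h2 : z.2 = 0 := congrArg Prod.fst h
    have h1 : z.1 = 0 := Subsingleton.elim _ _
    exact Prod.ext h1 h2
  · rintro rfl
    rfl

/-- Splitting `ℂⁿ ≃ ℂᵃ × ℂᵇ` when `n = a + b`. -/
noncomputable def Esp {n : ℕ} (a b : ℕ) (h : n = a + b) :
    (Fin n → ℂ) ≃ₗ[ℂ] (Fin a → ℂ) × (Fin b → ℂ) :=
  (LinearEquiv.funCongrLeft ℂ ℂ ((finCongr h).trans finSumFinEquiv.symm)).symm.trans
    (LinearEquiv.sumArrowLequivProdArrow _ _ ℂ ℂ)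

/-- Nonemptiness of `Dac k` given a splitting `k i = a i + a (i+1)` with `a 0 = 0`. -/
lemma dac_nonempty (k a : ℕ → ℕ) (h0 : a 0 = 0) (hk : ∀ i, k i = a i + a (i+1)) :
    Nonempty (Dac k) := by
  let E : ∀ i, (Fin (k i) → ℂ) ≃ₗ[ℂ] (Fin (a i) → ℂ) × (Fin (a (i+1)) → ℂ) :=
    fun i => Esp (a i) (a (i+1)) (hk i)
  refine ⟨⟨fun q => (E (q+1)).symm.toLinearMap ∘ₗ
      ((Mmap (a q) (a (q+1)) (a (q+2))) ∘ₗ (E q).toLinearMap), ?_, ?_, ?_⟩⟩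
  · intro q
    apply LinearMap.ext
    intro x
    simp [Mmap_apply]
  · rw [LinearMap.ker_comp, LinearEquiv.ker, Submodule.comap_bot, LinearMap.ker_comp,
      ker_Mmap_zero _ _ _ h0, Submodule.comap_bot, LinearEquiv.ker]
  · intro q
    rw [LinearMap.ker_comp, LinearEquiv.ker, Submodule.comap_bot, LinearMap.ker_comp,
      LinearMap.range_comp, LinearMap.range_comp, LinearEquiv.range, Submodule.map_top,
      ker_Mmap (a q), Submodule.comap_equiv_eq_map_symm]

/-- Existence of the splitting from admissibility. -/
lemma exists_splitting (n : ℕ) (k : ℕ → ℕ) (hkn : ∀ q, n < q → k q = 0)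
    (h1 : ∑ i ∈ Finset.range (n+1), (-1:ℤ)^i * (k i : ℤ) = 0)
    (h2 : ∀ i < n, 0 ≤ ∑ j ∈ Finset.range (i+1), (-1:ℤ)^(i+j) * (k j : ℤ)) :
    ∃ a : ℕ → ℕ, a 0 = 0 ∧ ∀ i, k i = a i + a (i+1) := by
  set T : ℕ → ℤ := fun i => ∑ j ∈ Finset.range i, (-1:ℤ)^(i+1+j) * (k j : ℤ) with hT
  have hrec : ∀ i, T i + T (i+1) = (k i : ℤ) := by
    intro i
    rw [hT]
    simp only
    rw [Finset.sum_range_succ]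
    have h2i : (-1:ℤ)^(i+1+1+i) = 1 := by
      have he : i+1+1+i = 2*(i+1) := by ring
      rw [he, pow_mul]; norm_num
    rw [h2i, one_mul]
    have hneg : ∑ j ∈ Finset.range i, (-1:ℤ)^(i+1+1+j) * (k j:ℤ)
        = -∑ j ∈ Finset.range i, (-1:ℤ)^(i+1+j) * (k j:ℤ) := by
      rw [← Finset.sum_neg_distrib]
      refine Finset.sum_congr rfl fun j _ => ?_
      have he : i+1+1+j = (i+1+j)+1 := by ring
      rw [he, pow_succ]; ring
    rw [hneg]; ring
  have hT0 : T 0 = 0 := by simp [hT]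
  have hTn1 : T (n+1) = 0 := by
    have : T (n+1) = (-1:ℤ)^n * ∑ i ∈ Finset.range (n+1), (-1:ℤ)^i * (k i : ℤ) := by
      rw [hT]
      simp only
      rw [Finset.mul_sum]
      refine Finset.sum_congr rfl fun j _ => ?_
      have he : n+1+1+j = 2 + (n + j) := by ring
      rw [he, pow_add, pow_add]
      ring
    rw [this, h1, mul_zero]
  have hTbig : ∀ i, n + 1 ≤ i → T i = 0 := by
    intro i hi
    induction i with
    | zero => omega
    | succ m ih =>
      rcases Nat.lt_or_ge m (n+1) with hm | hm
      · have : m = n := by omega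
        rw [this]; exact hTn1
      · have hTm := ih (by omega)
        have hkm : (k m : ℤ) = 0 := by
          have : k m = 0 := hkn m (by omega)
          simp [this]
        have := hrec m
        omega
  have hTpos : ∀ i, 0 ≤ T i := by
    intro i
    rcases Nat.eq_zero_or_pos i with h | h
    · rw [h, hT0]
    · rcases Nat.lt_or_ge i (n+1) with hi | hi
      · obtain ⟨m, rfl⟩ := Nat.exists_eq_succ_of_ne_zero h.ne'
        have h2m := h2 m (by omega)
        have : T (m+1) = ∑ j ∈ Finset.range (m+1), (-1:ℤ)^(m+j) * (k j : ℤ) := by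
          rw [hT]
          refine Finset.sum_congr rfl fun j _ => ?_
          have he : m+1+1+j = 2 + (m + j) := by ring
          rw [he, pow_add]
          ring
        rw [this]; exact h2m
      · rw [hTbig i hi]
  refine ⟨fun i => (T i).toNat, by simp [hT0], fun i => ?_⟩
  show k i = (T i).toNat + (T (i+1)).toNat
  have hi := hrec i
  have h0 := hTpos i
  have h1' := hTpos (i+1)
  omega

/-- Adjusting a complex by an automorphism of the target of `d⁰`. -/
noncomputable def adjustD (k : ℕ → ℕ) (C : Dac k) (f : (Fin (k 0) → ℂ) →ₗ[ℂ] (Fin (k 1) → ℂ))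
    (e : (Fin (k 1) → ℂ) ≃ₗ[ℂ] (Fin (k 1) → ℂ)) :
    ∀ q, (Fin (k q) → ℂ) →ₗ[ℂ] (Fin (k (q+1)) → ℂ)
  | 0 => f
  | 1 => C.1 1 ∘ₗ e.symm.toLinearMap
  | (q+2) => C.1 (q+2)

/-- Two injective maps into the same finite-dimensional space differ by an automorphism. -/
lemma exists_conj {M N : Type} [AddCommGroup M] [Module ℂ M] [AddCommGroup N] [Module ℂ N]
    [FiniteDimensional ℂ N] (f g : M →ₗ[ℂ] N) (hf : Function.Injective f)
    (hg : Function.Injective g) : ∃ e : N ≃ₗ[ℂ] N, e.toLinearMap ∘ₗ g = f := by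
  obtain ⟨qf, hqf⟩ := Submodule.exists_isCompl (LinearMap.range f)
  obtain ⟨qg, hqg⟩ := Submodule.exists_isCompl (LinearMap.range g)
  have hfr : Module.finrank ℂ qg = Module.finrank ℂ qf := by
    have ha := Submodule.finrank_add_eq_of_isCompl hqf
    have hb := Submodule.finrank_add_eq_of_isCompl hqg
    have hc : Module.finrank ℂ (LinearMap.range f) = Module.finrank ℂ M :=
      LinearMap.finrank_range_of_inj hf
    have hd : Module.finrank ℂ (LinearMap.range g) = Module.finrank ℂ M :=
      LinearMap.finrank_range_of_inj hg
    omega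
  let e1 : (LinearMap.range g) ≃ₗ[ℂ] (LinearMap.range f) :=
    (LinearEquiv.ofInjective g hg).symm.trans (LinearEquiv.ofInjective f hf)
  let e2 : qg ≃ₗ[ℂ] qf := LinearEquiv.ofFinrankEq _ _ hfr
  let e3 : N ≃ₗ[ℂ] (↥(LinearMap.range g) × ↥qg) :=
    (Submodule.prodEquivOfIsCompl (LinearMap.range g) qg hqg).symm
  let e4 : (↥(LinearMap.range g) × ↥qg) ≃ₗ[ℂ] (↥(LinearMap.range f) × ↥qf) :=
    LinearEquiv.prodCongr e1 e2
  let e : N ≃ₗ[ℂ] N :=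
    (e3.trans e4).trans (Submodule.prodEquivOfIsCompl (LinearMap.range f) qf hqf)
  refine ⟨e, ?_⟩
  apply LinearMap.ext
  intro v
  have key : (Submodule.prodEquivOfIsCompl _ _ hqg).symm (g v) =
      (⟨g v, LinearMap.mem_range_self g v⟩, 0) := by
    rw [LinearEquiv.symm_apply_eq]
    symm
    have := Submodule.coe_prodEquivOfIsCompl (LinearMap.range g) qg hqg
    calc (Submodule.prodEquivOfIsCompl _ _ hqg) (⟨g v, LinearMap.mem_range_self g v⟩, 0)
        = (LinearMap.range g).subtype.coprod qg.subtype
            (⟨g v, LinearMap.mem_range_self g v⟩, 0) := by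
          rw [← this]; rfl
      _ = g v := by simp
  have key2 : e1 ⟨g v, LinearMap.mem_range_self g v⟩ = ⟨f v, LinearMap.mem_range_self f v⟩ := by
    have hgv : (LinearEquiv.ofInjective g hg) v = ⟨g v, LinearMap.mem_range_self g v⟩ := by
      apply Subtype.ext
      exact LinearEquiv.ofInjective_apply g v
    show (LinearEquiv.ofInjective f hf) ((LinearEquiv.ofInjective g hg).symm
        ⟨g v, LinearMap.mem_range_self g v⟩) = _
    rw [← hgv, LinearEquiv.symm_apply_apply]
    apply Subtype.ext
    exact LinearEquiv.ofInjective_apply f v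
  show e (g v) = f v
  show (Submodule.prodEquivOfIsCompl (LinearMap.range f) qf hqf)
      ((LinearEquiv.prodCongr e1 e2) ((Submodule.prodEquivOfIsCompl (LinearMap.range g) qg hqg).symm (g v))) = f v
  rw [key]
  have : (LinearEquiv.prodCongr e1 e2) (⟨g v, LinearMap.mem_range_self g v⟩, 0) =
      (⟨f v, LinearMap.mem_range_self f v⟩, 0) := by
    simp [LinearEquiv.prodCongr_apply, key2]
  rw [this]
  calc (Submodule.prodEquivOfIsCompl _ _ hqf) (⟨f v, LinearMap.mem_range_self f v⟩, 0)
      = (LinearMap.range f).subtype.coprod qf.subtype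
          (⟨f v, LinearMap.mem_range_self f v⟩, 0) := by
        rw [← Submodule.coe_prodEquivOfIsCompl]; rfl
    _ = f v := by simp

/-- Surjectivity given a base point. -/
lemma surj_of_nonempty (k : ℕ → ℕ) (C : Dac k)
    (f : (Fin (k 0) → ℂ) →ₗ[ℂ] (Fin (k 1) → ℂ)) (hf : Function.Injective f) :
    ∃ C' : Dac k, C'.1 0 = f := by
  obtain ⟨hcc, hk0, hq⟩ := C.2
  have hg : Function.Injective (C.1 0) := LinearMap.ker_eq_bot.mp hk0
  obtain ⟨e, he⟩ := exists_conj f (C.1 0) hf hg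
  refine ⟨⟨adjustD k C f e, ?_, ?_, ?_⟩, rfl⟩
  · intro q
    match q with
    | 0 =>
      show (C.1 1 ∘ₗ e.symm.toLinearMap).comp f = 0
      apply LinearMap.ext
      intro x
      have hfx : f x = e (C.1 0 x) := by
        rw [← he]; rfl
      simp only [LinearMap.comp_apply, hfx, LinearEquiv.coe_coe, LinearEquiv.symm_apply_apply]
      have := DFunLike.congr_fun (hcc 0) x
      simpa using this
    | 1 =>
      show (C.1 2).comp (C.1 1 ∘ₗ e.symm.toLinearMap) = 0
      apply LinearMap.ext
      intro x
      have := DFunLike.congr_fun (hcc 1) (e.symm x)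
      simpa using this
    | (q+2) =>
      show (C.1 (q+3)).comp (C.1 (q+2)) = 0
      exact hcc (q+2)
  · exact LinearMap.ker_eq_bot.mpr hf
  · intro q
    match q with
    | 0 =>
      show LinearMap.ker (C.1 1 ∘ₗ e.symm.toLinearMap) = LinearMap.range f
      rw [LinearMap.ker_comp, hq 0, ← he, LinearMap.range_comp,
        Submodule.comap_equiv_eq_map_symm, LinearEquiv.symm_symm]
    | (q+1) =>
      show LinearMap.ker (C.1 (q+2)) = LinearMap.range (adjustD k C f e (q+1))
      match q with
      | 0 =>
        show LinearMap.ker (C.1 2) = LinearMap.range (C.1 1 ∘ₗ e.symm.toLinearMap)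
        rw [hq 1, LinearMap.range_comp_of_range_eq_top]
        exact LinearEquiv.range _
      | (q'+1) =>
        show LinearMap.ker (C.1 (q'+3)) = LinearMap.range (C.1 (q'+2))
        exact hq (q'+2)

/-- Forward differentials of the quotient complex. -/
noncomputable def Dfun (k : ℕ → ℕ) (s : (Fin (k 1 - k 0) → ℂ) →ₗ[ℂ] (Fin (k 1) → ℂ))
    (C : Dac k) : ∀ q, (Fin (shiftK k q) → ℂ) →ₗ[ℂ] (Fin (shiftK k (q+1)) → ℂ)
  | 0 => C.1 1 ∘ₗ s
  | (q+1) => C.1 (q+2)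

/-- Backward differentials: a complex extending `f` built from a quotient complex. -/
noncomputable def Cfun (k : ℕ → ℕ) (f : (Fin (k 0) → ℂ) →ₗ[ℂ] (Fin (k 1) → ℂ))
    (p : (Fin (k 1) → ℂ) →ₗ[ℂ] (Fin (k 1 - k 0) → ℂ)) (D : Dac (shiftK k)) :
    ∀ q, (Fin (k q) → ℂ) →ₗ[ℂ] (Fin (k (q+1)) → ℂ)
  | 0 => f
  | 1 => D.1 0 ∘ₗ p
  | (q+2) => D.1 (q+1)

/-- The fiber of `π₀` over an injective `f` is in bijection with `Dac (shiftK k)`. -/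
lemma fiber_equiv (k : ℕ → ℕ) (f : (Fin (k 0) → ℂ) →ₗ[ℂ] (Fin (k 1) → ℂ))
    (hf : Function.Injective f) :
    Nonempty ({C : Dac k // C.1 0 = f} ≃ Dac (shiftK k)) := by
  have hqdim : Module.finrank ℂ ((Fin (k 1) → ℂ) ⧸ LinearMap.range f) = k 1 - k 0 := by
    have h1 := Submodule.finrank_quotient_add_finrank (LinearMap.range f)
    rw [LinearMap.finrank_range_of_inj hf, Module.finrank_fin_fun, Module.finrank_fin_fun] at h1
    omega
  let eQ : ((Fin (k 1) → ℂ) ⧸ LinearMap.range f) ≃ₗ[ℂ] (Fin (k 1 - k 0) → ℂ) :=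
    LinearEquiv.ofFinrankEq _ _ (by rw [hqdim, Module.finrank_fin_fun])
  let p : (Fin (k 1) → ℂ) →ₗ[ℂ] (Fin (k 1 - k 0) → ℂ) :=
    eQ.toLinearMap ∘ₗ (LinearMap.range f).mkQ
  have hkerp : LinearMap.ker p = LinearMap.range f := by
    show LinearMap.ker (eQ.toLinearMap ∘ₗ (LinearMap.range f).mkQ) = _
    rw [LinearMap.ker_comp, LinearEquiv.ker, Submodule.comap_bot, Submodule.ker_mkQ]
  have hrangep : LinearMap.range p = ⊤ := by
    show LinearMap.range (eQ.toLinearMap ∘ₗ (LinearMap.range f).mkQ) = _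
    rw [LinearMap.range_comp, Submodule.range_mkQ, Submodule.map_top, LinearEquiv.range]
  obtain ⟨s, hs⟩ := LinearMap.exists_rightInverse_of_surjective p hrangep
  have hpf : p ∘ₗ f = 0 := by
    apply LinearMap.ext; intro x
    have hm : f x ∈ LinearMap.ker p := hkerp ▸ LinearMap.mem_range_self f x
    simpa using hm
  have hC11 : ∀ (C : Dac k), C.1 0 = f → (C.1 1) ∘ₗ (s ∘ₗ p) = C.1 1 := by
    intro C hC0
    apply LinearMap.ext; intro x
    have hker : s (p x) - x ∈ LinearMap.ker (C.1 1) := by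
      rw [C.2.2.2 0, hC0, ← hkerp]
      show p (s (p x) - x) = 0
      have hpsp : p (s (p x)) = p x := DFunLike.congr_fun hs (p x)
      simp [map_sub, hpsp]
    simp only [LinearMap.mem_ker, map_sub, sub_eq_zero] at hker
    simpa using hker
  have hF : ∀ (C : Dac k), C.1 0 = f →
      ((∀ q, (Dfun k s C (q+1)).comp (Dfun k s C q) = 0) ∧
        LinearMap.ker (Dfun k s C 0) = ⊥ ∧
        (∀ q, LinearMap.ker (Dfun k s C (q+1)) = LinearMap.range (Dfun k s C q))) := by
    intro C hC0
    obtain ⟨hcc, hk0, hq⟩ := C.2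
    refine ⟨?_, ?_, ?_⟩
    · intro q
      match q with
      | 0 =>
        show (C.1 2).comp ((C.1 1) ∘ₗ s) = 0
        apply LinearMap.ext; intro x
        have hx := DFunLike.congr_fun (hcc 1) (s x)
        simpa using hx
      | (q+1) =>
        show (C.1 (q+3)).comp (C.1 (q+2)) = 0
        exact hcc (q+2)
    · show LinearMap.ker ((C.1 1) ∘ₗ s) = ⊥
      rw [LinearMap.ker_comp, hq 0, hC0, ← hkerp]
      have hcs : Submodule.comap s (LinearMap.ker p) = LinearMap.ker (p ∘ₗ s) :=
        (LinearMap.ker_comp s p).symm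
      rw [hcs, hs, LinearMap.ker_id]
    · intro q
      match q with
      | 0 =>
        show LinearMap.ker (C.1 2) = LinearMap.range ((C.1 1) ∘ₗ s)
        rw [hq 1]
        apply le_antisymm
        · conv_lhs => rw [← hC11 C hC0]
          rw [← LinearMap.comp_assoc]
          exact LinearMap.range_comp_le_range _ _
        · exact LinearMap.range_comp_le_range _ _
      | (q+1) =>
        show LinearMap.ker (C.1 (q+3)) = LinearMap.range (C.1 (q+2))
        exact hq (q+2)
  have hG : ∀ (D : Dac (shiftK k)),
      ((∀ q, (Cfun k f p D (q+1)).comp (Cfun k f p D q) = 0) ∧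
        LinearMap.ker (Cfun k f p D 0) = ⊥ ∧
        (∀ q, LinearMap.ker (Cfun k f p D (q+1)) = LinearMap.range (Cfun k f p D q))) := by
    intro D
    obtain ⟨hcc, hk0, hq⟩ := D.2
    refine ⟨?_, ?_, ?_⟩
    · intro q
      match q with
      | 0 =>
        show ((D.1 0) ∘ₗ p).comp f = 0
        erw [LinearMap.comp_assoc, hpf, LinearMap.comp_zero]
      | 1 =>
        show (D.1 1).comp ((D.1 0) ∘ₗ p) = 0
        erw [← LinearMap.comp_assoc, hcc 0, LinearMap.zero_comp]
      | (q+2) =>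
        show (D.1 (q+2)).comp (D.1 (q+1)) = 0
        exact hcc (q+1)
    · exact LinearMap.ker_eq_bot.mpr hf
    · intro q
      match q with
      | 0 =>
        show LinearMap.ker ((D.1 0) ∘ₗ p) = LinearMap.range f
        erw [LinearMap.ker_comp, hk0, Submodule.comap_bot, hkerp]
      | 1 =>
        show LinearMap.ker (D.1 1) = LinearMap.range ((D.1 0) ∘ₗ p)
        erw [hq 0, LinearMap.range_comp_of_range_eq_top]
        exact hrangep
      | (q+2) =>
        show LinearMap.ker (D.1 (q+2)) = LinearMap.range (D.1 (q+1))
        exact hq (q+1)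
  refine ⟨⟨fun C => ⟨Dfun k s C.1, hF C.1 C.2⟩,
      fun D => ⟨⟨Cfun k f p D, hG D⟩, rfl⟩, ?_, ?_⟩⟩
  · rintro ⟨C, hC0⟩
    apply Subtype.ext
    apply Subtype.ext
    funext q
    match q with
    | 0 => exact hC0.symm
    | 1 =>
      show (C.1 1 ∘ₗ s) ∘ₗ p = C.1 1
      rw [LinearMap.comp_assoc]
      exact hC11 C hC0
    | (q+2) => rfl
  · intro D
    apply Subtype.ext
    funext q
    match q with
    | 0 =>
      show ((D.1 0) ∘ₗ p) ∘ₗ s = D.1 0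
      erw [LinearMap.comp_assoc, hs, LinearMap.comp_id]
    | (q+1) => rfl

/-- For admissible `k`, the map `π₀ : D_ac(k₀,…,kₙ) → Emb(ℂ^{k₀},ℂ^{k₁})`,
`C ↦ d⁰`, is surjective onto the injective linear maps, and each of its fibers is in
bijection with `D_ac(k₁-k₀, k₂,…,kₙ)`. -/
theorem statement14
    (n : ℕ) (k : ℕ → ℕ) (hkn : ∀ q, n < q → k q = 0)
    (hadm : (∑ i ∈ Finset.range (n+1), (-1:ℤ)^i * (k i : ℤ) = 0) ∧
      ∀ i < n, 0 ≤ ∑ j ∈ Finset.range (i+1), (-1:ℤ)^(i+j) * (k j : ℤ)) :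
    (∀ f : (Fin (k 0) → ℂ) →ₗ[ℂ] (Fin (k 1) → ℂ), Function.Injective f →
      ∃ C : Dac k, C.1 0 = f) ∧
    (∀ f : (Fin (k 0) → ℂ) →ₗ[ℂ] (Fin (k 1) → ℂ), Function.Injective f →
      Nonempty ({C : Dac k // C.1 0 = f} ≃
        Dac (fun i => if i = 0 then k 1 - k 0 else k (i+1)))) := by
  constructor
  · intro f hf
    obtain ⟨a, ha0, hka⟩ := exists_splitting n k hkn hadm.1 hadm.2
    obtain ⟨C⟩ := dac_nonempty k a ha0 hka
    exact surj_of_nonempty k C f hf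
  · intro f hf
    exact fiber_equiv k f hf
end

section
/- Multiplicativity of torsion in short exact sequences of acyclic complexes: if 0 → C' → C → C'' → 0 is a short exact sequence of finite acyclic cochain complexes over ℂ that is degreewise split compatibly with chosen bases, then τ(C) = ± τ(C')·τ(C''). -/
namespace Stmt16

/-- Inclusion of the first block. -/
def inc {a b : ℕ} (v : Fin a → ℂ) : Fin (a + b) → ℂ :=
  fun x => Sum.elim v 0 (finSumFinEquiv.symm x)

/-- Inclusion of the second block. -/
def sec {a b : ℕ} (w : Fin b → ℂ) : Fin (a + b) → ℂ :=
  fun x => Sum.elim 0 w (finSumFinEquiv.symm x)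

/-- Projection to the first block, as a linear map. -/
def pr1 (a b : ℕ) : (Fin (a + b) → ℂ) →ₗ[ℂ] (Fin a → ℂ) :=
  LinearMap.funLeft ℂ ℂ (fun y => finSumFinEquiv (Sum.inl y))

/-- Projection to the second block, as a linear map. -/
def pr2 (a b : ℕ) : (Fin (a + b) → ℂ) →ₗ[ℂ] (Fin b → ℂ) :=
  LinearMap.funLeft ℂ ℂ (fun y => finSumFinEquiv (Sum.inr y))

@[simp] lemma inc_inl {a b : ℕ} (v : Fin a → ℂ) (x : Fin a) :
    inc (b := b) v (finSumFinEquiv (Sum.inl x)) = v x := by simp [inc]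

@[simp] lemma inc_inr {a b : ℕ} (v : Fin a → ℂ) (y : Fin b) :
    inc v (finSumFinEquiv (Sum.inr y)) = 0 := by simp [inc]

@[simp] lemma sec_inl {a b : ℕ} (w : Fin b → ℂ) (x : Fin a) :
    sec w (finSumFinEquiv (Sum.inl x)) = 0 := by simp [sec]

@[simp] lemma sec_inr {a b : ℕ} (w : Fin b → ℂ) (y : Fin b) :
    sec (a := a) w (finSumFinEquiv (Sum.inr y)) = w y := by simp [sec]

@[simp] lemma pr1_inc {a b : ℕ} (v : Fin a → ℂ) : pr1 a b (inc v) = v := by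
  funext x; simp [pr1, LinearMap.funLeft, inc, sec]

@[simp] lemma pr2_inc {a b : ℕ} (v : Fin a → ℂ) : pr2 a b (inc v) = 0 := by
  funext y; simp [pr2, LinearMap.funLeft, inc, sec]

@[simp] lemma pr1_sec {a b : ℕ} (w : Fin b → ℂ) : pr1 a b (sec w) = 0 := by
  funext x; simp [pr1, LinearMap.funLeft, inc, sec]

@[simp] lemma pr2_sec {a b : ℕ} (w : Fin b → ℂ) : pr2 a b (sec w) = w := by
  funext y; simp [pr2, LinearMap.funLeft, inc, sec]

/-- The torsion matrix at one level. -/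
def tmat {K R R2 : ℕ} (h : K = R + R2) (β : Fin R → Fin K → ℂ) (γ : Fin R2 → Fin K → ℂ) :
    Matrix (Fin K) (Fin K) ℂ :=
  Matrix.of fun a b => Sum.elim (fun j => β j a) (fun j => γ j a)
    (finSumFinEquiv.symm (finCongr h b))

lemma telescope (a : ℕ → ℂ) (ha : ∀ i, a i ≠ 0) (m : ℕ) :
    ∏ i ∈ Finset.range m, (a i * a (i+1)) ^ ((-1:ℤ)^i)
    = a 0 * (a m) ^ (-((-1:ℤ)^m)) := by
  induction m with
  | zero =>
    simp only [Finset.range_zero, Finset.prod_empty, pow_zero]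
    rw [zpow_neg, zpow_one, mul_inv_cancel₀ (ha 0)]
  | succ m ih =>
    rw [Finset.prod_range_succ, ih, mul_zpow]
    have h1 : a m ^ (-((-1:ℤ)^m)) * a m ^ ((-1:ℤ)^m) = 1 := by
      rw [← zpow_add₀ (ha m), neg_add_cancel, zpow_zero]
    have h2 : -((-1:ℤ)^(m+1)) = (-1:ℤ)^m := by rw [pow_succ]; ring
    rw [h2]
    calc a 0 * a m ^ (-((-1:ℤ)^m)) * (a m ^ ((-1:ℤ)^m) * a (m+1) ^ ((-1:ℤ)^m))
        = a 0 * a (m+1) ^ ((-1:ℤ)^m) * (a m ^ (-((-1:ℤ)^m)) * a m ^ ((-1:ℤ)^m)) := by ring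
      _ = a 0 * a (m+1) ^ ((-1:ℤ)^m) := by rw [h1, mul_one]

lemma pm_zpow {x : ℂ} (h : x = 1 ∨ x = -1) (z : ℤ) : x ^ z = 1 ∨ x ^ z = -1 := by
  rcases h with rfl | rfl
  · left; exact one_zpow z
  · rcases Int.even_or_odd z with he | ho
    · left; rw [he.neg_zpow, one_zpow]
    · right; rw [ho.neg_zpow, one_zpow]

lemma mul_submatrix_det {m : ℕ} {c : Type*} [Fintype c] [DecidableEq c]
    (X : Matrix (Fin m) c ℂ) (S : Matrix c c ℂ) (e : Fin m ≃ c) :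
    ((X * S).submatrix id e).det = (X.submatrix id e).det * S.det := by
  have h : (X * S).submatrix id e = (X.submatrix id e) * (S.submatrix e e) := by
    ext a b
    simp only [Matrix.submatrix_apply, Matrix.mul_apply, id]
    exact (Fintype.sum_equiv e _ _ fun x => rfl).symm
  rw [h, Matrix.det_mul, Matrix.det_submatrix_equiv_self]

lemma det_step {K R R2 : ℕ} (h : K = R + R2)
    (β β₂ : Fin R → Fin K → ℂ) (γ γ₂ : Fin R2 → Fin K → ℂ)
    (A : Matrix (Fin R) (Fin R) ℂ) (A' : Matrix (Fin R2) (Fin R2) ℂ)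
    (C : Matrix (Fin R) (Fin R2) ℂ)
    (hb : ∀ j a, β₂ j a = ∑ x, A x j * β x a)
    (hg : ∀ j a, γ₂ j a = (∑ x, C x j * β x a) + ∑ x, A' x j * γ x a) :
    (tmat h β₂ γ₂).det = (tmat h β γ).det * (A.det * A'.det) := by
  classical
  have hXS : (Matrix.of fun a c => Sum.elim (fun j => β₂ j a) (fun j => γ₂ j a) c)
      = (Matrix.of fun a c => Sum.elim (fun j => β j a) (fun j => γ j a) c)
        * Matrix.fromBlocks A C 0 A' := by
    ext a c
    rcases c with j | j
    · simp only [Matrix.of_apply, Sum.elim_inl, Matrix.mul_apply, Fintype.sum_sum_type,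
        Matrix.fromBlocks_apply₁₁, Matrix.fromBlocks_apply₂₁, Sum.elim_inr,
        Matrix.zero_apply, mul_zero, Finset.sum_const_zero, add_zero]
      rw [hb j a]
      exact Finset.sum_congr rfl fun x _ => mul_comm _ _
    · simp only [Matrix.of_apply, Sum.elim_inl, Sum.elim_inr, Matrix.mul_apply,
        Fintype.sum_sum_type, Matrix.fromBlocks_apply₁₂, Matrix.fromBlocks_apply₂₂]
      rw [hg j a]
      congr 1
      · exact Finset.sum_congr rfl fun x _ => mul_comm _ _
      · exact Finset.sum_congr rfl fun x _ => mul_comm _ _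
  have h1 : tmat h β₂ γ₂
      = ((Matrix.of fun a c => Sum.elim (fun j => β₂ j a) (fun j => γ₂ j a) c).submatrix id
          ((finCongr h).trans finSumFinEquiv.symm)) := rfl
  have h2 : tmat h β γ
      = ((Matrix.of fun a c => Sum.elim (fun j => β j a) (fun j => γ j a) c).submatrix id
          ((finCongr h).trans finSumFinEquiv.symm)) := rfl
  rw [h1, h2, hXS, mul_submatrix_det, Matrix.det_fromBlocks_zero₂₁]

end Stmt16

namespace Stmt16

open Submodule

/-- The lifted image columns in the middle complex. -/
def Lc (k' k'' r'' : ℕ → ℕ)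
    (d : ∀ q : ℕ, ((Fin (k' q + k'' q) → ℂ) →ₗ[ℂ] (Fin (k' (q+1) + k'' (q+1)) → ℂ)))
    (γ'' : ∀ i, Fin (r'' (i+1)) → (Fin (k'' i) → ℂ)) :
    ∀ i, Fin (r'' i) → (Fin (k' i + k'' i) → ℂ)
  | 0, _ => 0
  | (m+1), j => d m (sec (γ'' m j))

lemma rank_range (k r : ℕ → ℕ)
    (d : ∀ q : ℕ, ((Fin (k q) → ℂ) →ₗ[ℂ] (Fin (k (q+1)) → ℂ)))
    (hex0 : LinearMap.ker (d 0) = ⊥)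
    (hex : ∀ q, LinearMap.ker (d (q+1)) = LinearMap.range (d q))
    (hr0 : r 0 = 0) (hkr : ∀ i, k i = r i + r (i+1)) :
    ∀ i, Module.finrank ℂ (LinearMap.range (d i)) = r (i+1) := by
  intro i
  induction i with
  | zero =>
    have h := LinearMap.finrank_range_add_finrank_ker (d 0)
    rw [hex0, finrank_bot, Module.finrank_fin_fun] at h
    have := hkr 0
    omega
  | succ m ih =>
    have h := LinearMap.finrank_range_add_finrank_ker (d (m+1))
    rw [hex m, ih, Module.finrank_fin_fun] at h
    have := hkr (m+1)
    omega

lemma invariance (n : ℕ) (k r : ℕ → ℕ) (hk1 : k (n+1) = 0)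
    (d : ∀ q : ℕ, ((Fin (k q) → ℂ) →ₗ[ℂ] (Fin (k (q+1)) → ℂ)))
    (hex0 : LinearMap.ker (d 0) = ⊥)
    (hex : ∀ q, LinearMap.ker (d (q+1)) = LinearMap.range (d q))
    (hr0 : r 0 = 0) (hkr : ∀ i, k i = r i + r (i+1))
    (β β₂ : ∀ i, Fin (r i) → Fin (k i) → ℂ)
    (γ γ₂ : ∀ i, Fin (r (i+1)) → Fin (k i) → ℂ)
    (hli₂ : ∀ i, LinearIndependent ℂ (β₂ i))
    (hsp : ∀ i, Submodule.span ℂ (Set.range (β (i+1))) = LinearMap.range (d i))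
    (hsp₂ : ∀ i, Submodule.span ℂ (Set.range (β₂ (i+1))) = LinearMap.range (d i))
    (hγ : ∀ i j, d i (γ i j) = β (i+1) j)
    (hγ₂ : ∀ i j, d i (γ₂ i j) = β₂ (i+1) j) :
    ∏ i ∈ Finset.range (n+1), (tmat (hkr i) (β₂ i) (γ₂ i)).det ^ ((-1:ℤ)^i)
      = ∏ i ∈ Finset.range (n+1), (tmat (hkr i) (β i) (γ i)).det ^ ((-1:ℤ)^i) := by
  classical
  have hrn1 : r (n+1) = 0 := by have := hkr (n+1); omega
  have hmem : ∀ i (j : Fin (r i)), β₂ i j ∈ Submodule.span ℂ (Set.range (β i)) := by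
    intro i
    match i with
    | 0 => exact fun j => absurd j.isLt (by omega)
    | (m+1) =>
      intro j
      rw [hsp m]
      exact hsp₂ m ▸ Submodule.subset_span ⟨j, rfl⟩
  choose coA hcoA using fun i j => (mem_span_range_iff_exists_fun ℂ).mp (hmem i j)
  have hmemγ : ∀ i (j : Fin (r (i+1))),
      γ₂ i j - ∑ x, coA (i+1) j x • γ i x ∈ Submodule.span ℂ (Set.range (β i)) := by
    intro i j
    have hd0 : d i (γ₂ i j - ∑ x, coA (i+1) j x • γ i x) = 0 := by
      rw [map_sub, map_sum]
      simp_rw [map_smul, hγ]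
      rw [hγ₂, hcoA (i+1) j, sub_self]
    match i with
    | 0 =>
      have h0 : γ₂ 0 j - ∑ x, coA 1 j x • γ 0 x ∈ LinearMap.ker (d 0) :=
        LinearMap.mem_ker.mpr hd0
      rw [hex0, Submodule.mem_bot] at h0
      rw [h0]; exact Submodule.zero_mem _
    | (m+1) =>
      have h0 : γ₂ (m+1) j - ∑ x, coA (m+2) j x • γ (m+1) x ∈ LinearMap.ker (d (m+1)) :=
        LinearMap.mem_ker.mpr hd0
      rw [hex m, ← hsp m] at h0
      exact h0
  choose coC hcoC using fun i j => (mem_span_range_iff_exists_fun ℂ).mp (hmemγ i j)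
  have hdet : ∀ i, (tmat (hkr i) (β₂ i) (γ₂ i)).det
      = (tmat (hkr i) (β i) (γ i)).det
        * ((Matrix.of fun x j => coA i j x).det * (Matrix.of fun x j => coA (i+1) j x).det) := by
    intro i
    apply det_step (hkr i) (β i) (β₂ i) (γ i) (γ₂ i) _ _ (Matrix.of fun x j => coC i j x)
    · intro j a
      have h := congrFun (hcoA i j) a
      simp only [Finset.sum_apply, Pi.smul_apply, smul_eq_mul] at h
      rw [← h]
      exact (Finset.sum_congr rfl fun x _ => rfl)
    · intro j a
      have h := congrFun (hcoC i j) a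
      simp only [Finset.sum_apply, Pi.sub_apply, Pi.smul_apply, smul_eq_mul] at h
      have h2 : γ₂ i j a = (∑ x, coC i j x * β i x a) + ∑ x, coA (i+1) j x * γ i x a := by
        rw [h]; ring
      exact h2
  have hAne : ∀ i, (Matrix.of fun x (j : Fin (r i)) => coA i j x).det ≠ 0 := by
    intro i hzero
    obtain ⟨v, hv0, hAv⟩ := Matrix.exists_mulVec_eq_zero_iff.mpr hzero
    apply hv0
    funext j
    refine Fintype.linearIndependent_iff.mp (hli₂ i) v ?_ j
    have hrw : ∀ j, β₂ i j = ∑ x, coA i j x • β i x := fun j => (hcoA i j).symm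
    have hv : ∀ x, ∑ j, coA i j x * v j = 0 := by
      intro x
      have := congrFun hAv x
      simpa [Matrix.mulVec, dotProduct] using this
    calc ∑ j, v j • β₂ i j = ∑ j, ∑ x, (coA i j x * v j) • β i x := by
          simp_rw [hrw, Finset.smul_sum, smul_smul]
          exact Finset.sum_congr rfl fun j _ => Finset.sum_congr rfl fun x _ => by
            rw [mul_comm]
      _ = ∑ x, (∑ j, coA i j x * v j) • β i x := by
          rw [Finset.sum_comm]
          exact Finset.sum_congr rfl fun x _ => (Finset.sum_smul).symm
      _ = 0 := by simp [hv]
  have key : ∀ i ∈ Finset.range (n+1), (tmat (hkr i) (β₂ i) (γ₂ i)).det ^ ((-1:ℤ)^i)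
      = (tmat (hkr i) (β i) (γ i)).det ^ ((-1:ℤ)^i)
        * (((Matrix.of fun x (j : Fin (r i)) => coA i j x).det
            * (Matrix.of fun x (j : Fin (r (i+1))) => coA (i+1) j x).det) ^ ((-1:ℤ)^i)) := by
    intro i _
    rw [hdet i, mul_zpow]
  rw [Finset.prod_congr rfl key, Finset.prod_mul_distrib]
  have tel := telescope (fun i => (Matrix.of fun x (j : Fin (r i)) => coA i j x).det) hAne (n+1)
  rw [tel]
  have e0 : (Matrix.of fun x (j : Fin (r 0)) => coA 0 j x).det = 1 := by
    haveI : IsEmpty (Fin (r 0)) := by rw [hr0]; infer_instance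
    exact Matrix.det_isEmpty
  have e1 : (Matrix.of fun x (j : Fin (r (n+1))) => coA (n+1) j x).det = 1 := by
    haveI : IsEmpty (Fin (r (n+1))) := by rw [hrn1]; infer_instance
    exact Matrix.det_isEmpty
  rw [e0, e1, one_zpow, mul_one, mul_one]

end Stmt16

namespace Stmt16

lemma eSplit_spec {K R R2 : ℕ} (h : K = R + R2) (z : Fin R ⊕ Fin R2) :
    finSumFinEquiv.symm (finCongr h ((finSumFinEquiv.trans (finCongr h.symm)) z)) = z := by
  subst h; simp

lemma det_level {K1 K2 R1 R1' R2 R2' RR RR' : ℕ}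
    (h1 : K1 = R1 + R1') (h2 : K2 = R2 + R2') (hh : K1 + K2 = RR + RR')
    (hr : RR = R1 + R2) (hr' : RR' = R1' + R2')
    (β1 : Fin R1 → Fin K1 → ℂ) (γ1 : Fin R1' → Fin K1 → ℂ)
    (β2 : Fin R2 → Fin K2 → ℂ) (γ2 : Fin R2' → Fin K2 → ℂ)
    (L : Fin R2 → Fin (K1 + K2) → ℂ)
    (hLr : ∀ j y, L j (finSumFinEquiv (Sum.inr y)) = β2 j y) :
    ∃ s : ℂ, (s = 1 ∨ s = -1) ∧
      (tmat hh
        (fun j => Sum.elim (fun j' => inc (β1 j')) L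
          (((finCongr hr).trans finSumFinEquiv.symm) j))
        (fun j => Sum.elim (fun j' => inc (γ1 j')) (fun j'' => sec (γ2 j''))
          (((finCongr hr').trans finSumFinEquiv.symm) j))).det
      = s * ((tmat h1 β1 γ1).det * (tmat h2 β2 γ2).det) := by
  classical
  set W : Matrix (Fin K1) (Fin K2) ℂ :=
    Matrix.of fun x b => Sum.elim (fun j => L j (finSumFinEquiv (Sum.inl x))) (fun _ => (0:ℂ))
      (finSumFinEquiv.symm (finCongr h2 b)) with hW
  set F : Matrix (Fin K1 ⊕ Fin K2) (Fin K1 ⊕ Fin K2) ℂ :=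
    Matrix.fromBlocks (tmat h1 β1 γ1) W 0 (tmat h2 β2 γ2) with hF
  set q : Fin (K1 + K2) ≃ (Fin K1 ⊕ Fin K2) :=
    (((finCongr hh).trans finSumFinEquiv.symm).trans
      ((Equiv.sumCongr ((finCongr hr).trans finSumFinEquiv.symm)
          ((finCongr hr').trans finSumFinEquiv.symm)).trans
        ((Equiv.sumSumSumComm (Fin R1) (Fin R2) (Fin R1') (Fin R2')).trans
          (Equiv.sumCongr (finSumFinEquiv.trans (finCongr h1.symm))
            (finSumFinEquiv.trans (finCongr h2.symm)))))) with hq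
  set p : Equiv.Perm (Fin (K1 + K2)) := q.trans finSumFinEquiv with hp
  have hentry : ∀ a b, (tmat hh
        (fun j => Sum.elim (fun j' => inc (β1 j')) L
          (((finCongr hr).trans finSumFinEquiv.symm) j))
        (fun j => Sum.elim (fun j' => inc (γ1 j')) (fun j'' => sec (γ2 j''))
          (((finCongr hr').trans finSumFinEquiv.symm) j))) a b
      = F ((finSumFinEquiv.symm a : Fin K1 ⊕ Fin K2)) (q b) := by
    intro a b
    show Sum.elim _ _ (finSumFinEquiv.symm (finCongr hh b))
      = F ((finSumFinEquiv.symm a : Fin K1 ⊕ Fin K2)) (q b)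
    have hqb0 : q b = (Equiv.sumCongr (finSumFinEquiv.trans (finCongr h1.symm))
        (finSumFinEquiv.trans (finCongr h2.symm)))
        ((Equiv.sumSumSumComm (Fin R1) (Fin R2) (Fin R1') (Fin R2'))
          ((Equiv.sumCongr ((finCongr hr).trans finSumFinEquiv.symm)
              ((finCongr hr').trans finSumFinEquiv.symm))
            (finSumFinEquiv.symm (finCongr hh b)))) := rfl
    rcases hc : finSumFinEquiv.symm (finCongr hh b) with j | j
    · simp only [Sum.elim_inl]
      rcases hφ : ((finCongr hr).trans finSumFinEquiv.symm) j with j' | j''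
      · -- β1 column
        have hqb : q b = Sum.inl ((finSumFinEquiv.trans (finCongr h1.symm)) (Sum.inl j')) := by
          rw [hqb0, hc]
          simp only [Equiv.sumCongr_apply, Sum.map_inl, hφ]
          rfl
        simp only [Sum.elim_inl]
        rw [hqb]
        rcases ha : (finSumFinEquiv.symm a : Fin K1 ⊕ Fin K2) with x | x
        · have ha' : a = finSumFinEquiv (Sum.inl x) := by rw [← ha, Equiv.apply_symm_apply]
          rw [ha', inc_inl]
          show _ = Sum.elim (fun j => β1 j x) (fun j => γ1 j x)
            (finSumFinEquiv.symm (finCongr h1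
              ((finSumFinEquiv.trans (finCongr h1.symm)) (Sum.inl j'))))
          rw [eSplit_spec h1, Sum.elim_inl]
        · have ha' : a = finSumFinEquiv (Sum.inr x) := by rw [← ha, Equiv.apply_symm_apply]
          rw [ha', inc_inr]
          rfl
      · -- L column
        have hqb : q b = Sum.inr ((finSumFinEquiv.trans (finCongr h2.symm)) (Sum.inl j'')) := by
          rw [hqb0, hc]
          simp only [Equiv.sumCongr_apply, Sum.map_inl, hφ]
          rfl
        simp only [Sum.elim_inr]
        rw [hqb]
        rcases ha : (finSumFinEquiv.symm a : Fin K1 ⊕ Fin K2) with x | x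
        · have ha' : a = finSumFinEquiv (Sum.inl x) := by rw [← ha, Equiv.apply_symm_apply]
          rw [ha']
          show L j'' (finSumFinEquiv (Sum.inl x))
            = Sum.elim (fun j => L j (finSumFinEquiv (Sum.inl x))) (fun _ => (0:ℂ))
              (finSumFinEquiv.symm (finCongr h2
                ((finSumFinEquiv.trans (finCongr h2.symm)) (Sum.inl j''))))
          rw [eSplit_spec h2, Sum.elim_inl]
        · have ha' : a = finSumFinEquiv (Sum.inr x) := by rw [← ha, Equiv.apply_symm_apply]
          rw [ha', hLr]
          show _ = Sum.elim (fun j => β2 j x) (fun j => γ2 j x)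
            (finSumFinEquiv.symm (finCongr h2
              ((finSumFinEquiv.trans (finCongr h2.symm)) (Sum.inl j''))))
          rw [eSplit_spec h2, Sum.elim_inl]
    · simp only [Sum.elim_inr]
      rcases hφ : ((finCongr hr').trans finSumFinEquiv.symm) j with j' | j''
      · -- γ1 column
        have hqb : q b = Sum.inl ((finSumFinEquiv.trans (finCongr h1.symm)) (Sum.inr j')) := by
          rw [hqb0, hc]
          simp only [Equiv.sumCongr_apply, Sum.map_inr, hφ]
          rfl
        simp only [Sum.elim_inl]
        rw [hqb]
        rcases ha : (finSumFinEquiv.symm a : Fin K1 ⊕ Fin K2) with x | x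
        · have ha' : a = finSumFinEquiv (Sum.inl x) := by rw [← ha, Equiv.apply_symm_apply]
          rw [ha', inc_inl]
          show _ = Sum.elim (fun j => β1 j x) (fun j => γ1 j x)
            (finSumFinEquiv.symm (finCongr h1
              ((finSumFinEquiv.trans (finCongr h1.symm)) (Sum.inr j'))))
          rw [eSplit_spec h1, Sum.elim_inr]
        · have ha' : a = finSumFinEquiv (Sum.inr x) := by rw [← ha, Equiv.apply_symm_apply]
          rw [ha', inc_inr]
          rfl
      · -- sec γ2 column
        have hqb : q b = Sum.inr ((finSumFinEquiv.trans (finCongr h2.symm)) (Sum.inr j'')) := by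
          rw [hqb0, hc]
          simp only [Equiv.sumCongr_apply, Sum.map_inr, hφ]
          rfl
        simp only [Sum.elim_inr]
        rw [hqb]
        rcases ha : (finSumFinEquiv.symm a : Fin K1 ⊕ Fin K2) with x | x
        · have ha' : a = finSumFinEquiv (Sum.inl x) := by rw [← ha, Equiv.apply_symm_apply]
          rw [ha', sec_inl]
          show (0:ℂ) = Sum.elim (fun j => L j (finSumFinEquiv (Sum.inl x))) (fun _ => (0:ℂ))
            (finSumFinEquiv.symm (finCongr h2
              ((finSumFinEquiv.trans (finCongr h2.symm)) (Sum.inr j''))))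
          rw [eSplit_spec h2, Sum.elim_inr]
        · have ha' : a = finSumFinEquiv (Sum.inr x) := by rw [← ha, Equiv.apply_symm_apply]
          rw [ha', sec_inr]
          show _ = Sum.elim (fun j => β2 j x) (fun j => γ2 j x)
            (finSumFinEquiv.symm (finCongr h2
              ((finSumFinEquiv.trans (finCongr h2.symm)) (Sum.inr j''))))
          rw [eSplit_spec h2, Sum.elim_inr]
  refine ⟨(((Equiv.Perm.sign p : ℤˣ) : ℤ) : ℂ), ?_, ?_⟩
  · rcases Int.units_eq_one_or (Equiv.Perm.sign p) with h | h <;> rw [h] <;> simp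
  · have hmat : (tmat hh
        (fun j => Sum.elim (fun j' => inc (β1 j')) L
          (((finCongr hr).trans finSumFinEquiv.symm) j))
        (fun j => Sum.elim (fun j' => inc (γ1 j')) (fun j'' => sec (γ2 j''))
          (((finCongr hr').trans finSumFinEquiv.symm) j)))
      = (F.submatrix (finSumFinEquiv.symm : Fin (K1+K2) ≃ (Fin K1 ⊕ Fin K2))
          (finSumFinEquiv.symm : Fin (K1+K2) ≃ (Fin K1 ⊕ Fin K2))).submatrix id p := by
      ext a b
      rw [hentry a b]
      simp only [Matrix.submatrix_apply, id]
      congr 1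
      show q b = finSumFinEquiv.symm (finSumFinEquiv (q b))
      rw [Equiv.symm_apply_apply]
    rw [hmat, Matrix.det_permute', Matrix.det_submatrix_equiv_self, hF,
      Matrix.det_fromBlocks_zero₂₁]

end Stmt16

namespace Stmt16

lemma span_eq_of {t m : ℕ} (v : Fin t → (Fin m → ℂ)) (W : Submodule ℂ (Fin m → ℂ))
    (hli : LinearIndependent ℂ v) (hmem : ∀ j, v j ∈ W) (hrk : Module.finrank ℂ W = t) :
    Submodule.span ℂ (Set.range v) = W := by
  apply Submodule.eq_of_le_of_finrank_le
  · rw [Submodule.span_le]; rintro x ⟨j, rfl⟩; exact hmem j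
  · rw [hrk, finrank_span_eq_card hli, Fintype.card_fin]

lemma Bc_li (k' k'' r r' r'' : ℕ → ℕ)
    (L : ∀ i, Fin (r'' i) → (Fin (k' i + k'' i) → ℂ))
    (hrr : ∀ i, r i = r' i + r'' i)
    (β' : ∀ i, Fin (r' i) → (Fin (k' i) → ℂ))
    (β'' : ∀ i, Fin (r'' i) → (Fin (k'' i) → ℂ))
    (hβli' : ∀ i, LinearIndependent ℂ (β' i))
    (hβli'' : ∀ i, LinearIndependent ℂ (β'' i))
    (hL2 : ∀ i j y, L i j (finSumFinEquiv (Sum.inr y)) = β'' i j y) :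
    ∀ i, LinearIndependent ℂ (fun j : Fin (r i) =>
      Sum.elim (fun j' => inc (β' i j')) (L i)
        (((finCongr (hrr i)).trans finSumFinEquiv.symm) j)) := by
  intro i
  have hpr : ∀ j'', pr2 (k' i) (k'' i) (L i j'') = β'' i j'' :=
    fun j'' => funext fun y => hL2 i j'' y
  have key : LinearIndependent ℂ (Sum.elim (fun j' => inc (β' i j')) (L i)) := by
    rw [Fintype.linearIndependent_iff]
    intro g hg
    have hg2 : ∀ j'', g (Sum.inr j'') = 0 := by
      have h2 := congrArg (pr2 (k' i) (k'' i)) hg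
      rw [map_sum, map_zero] at h2
      simp only [map_smul] at h2
      rw [Fintype.sum_sum_type] at h2
      simp only [Sum.elim_inl, Sum.elim_inr, pr2_inc, smul_zero, Finset.sum_const_zero,
        zero_add, hpr] at h2
      exact Fintype.linearIndependent_iff.mp (hβli'' i) _ h2
    have hg1 : ∀ j', g (Sum.inl j') = 0 := by
      rw [Fintype.sum_sum_type] at hg
      simp only [Sum.elim_inl, Sum.elim_inr, hg2, zero_smul, Finset.sum_const_zero,
        add_zero] at hg
      have h1 := congrArg (pr1 (k' i) (k'' i)) hg
      rw [map_sum, map_zero] at h1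
      simp only [map_smul, pr1_inc] at h1
      exact Fintype.linearIndependent_iff.mp (hβli' i) _ h1
    intro x
    rcases x with j' | j''
    exacts [hg1 j', hg2 j'']
  exact key.comp (((finCongr (hrr i)).trans finSumFinEquiv.symm)) (Equiv.injective _)

end Stmt16

open Stmt16

/-- Multiplicativity of torsion in short exact sequences of acyclic
complexes: let `0 → C' → C → C'' → 0` be a degreewise split short exact sequence of
acyclic finite cochain complexes over `ℂ`, realized with chosen splittings so that
`C^i = ℂ^{k' i} ⊕ ℂ^{k'' i}`, the inclusion of `C'` is the inclusion of the first
factor and is a chain map (`hsub`), and the projection to the second factor is a chain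
map onto `C''` (`hquot`). Then the torsions — each computed from any admissible choice
of bases of images and lifts — satisfy `τ(C) = ± τ(C')·τ(C'')`. -/
theorem statement16
    (n : ℕ) (k' k'' r r' r'' : ℕ → ℕ)
    (hk'n : ∀ q, n < q → k' q = 0) (hk''n : ∀ q, n < q → k'' q = 0)
    (d' : ∀ q : ℕ, ((Fin (k' q) → ℂ) →ₗ[ℂ] (Fin (k' (q+1)) → ℂ)))
    (d'' : ∀ q : ℕ, ((Fin (k'' q) → ℂ) →ₗ[ℂ] (Fin (k'' (q+1)) → ℂ)))
    (d : ∀ q : ℕ, ((Fin (k' q + k'' q) → ℂ) →ₗ[ℂ] (Fin (k' (q+1) + k'' (q+1)) → ℂ)))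
    (hdd' : ∀ q, (d' (q+1)).comp (d' q) = 0)
    (hdd'' : ∀ q, (d'' (q+1)).comp (d'' q) = 0)
    (hdd : ∀ q, (d (q+1)).comp (d q) = 0)
    (hex0' : LinearMap.ker (d' 0) = ⊥)
    (hex' : ∀ q, LinearMap.ker (d' (q+1)) = LinearMap.range (d' q))
    (hex0'' : LinearMap.ker (d'' 0) = ⊥)
    (hex'' : ∀ q, LinearMap.ker (d'' (q+1)) = LinearMap.range (d'' q))
    (hex0 : LinearMap.ker (d 0) = ⊥)
    (hex : ∀ q, LinearMap.ker (d (q+1)) = LinearMap.range (d q))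
    (hsub : ∀ q (u : Fin (k' q) → ℂ),
      d q (fun x => Sum.elim u 0 (finSumFinEquiv.symm x))
        = fun x => Sum.elim (d' q u) 0 (finSumFinEquiv.symm x))
    (hquot : ∀ q (w : Fin (k' q + k'' q) → ℂ) (a : Fin (k'' (q+1))),
      d q w (finSumFinEquiv (Sum.inr a))
        = d'' q (fun x => w (finSumFinEquiv (Sum.inr x))) a)
    (hr0' : r' 0 = 0) (hkr' : ∀ i, k' i = r' i + r' (i+1))
    (hr0'' : r'' 0 = 0) (hkr'' : ∀ i, k'' i = r'' i + r'' (i+1))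
    (hr0 : r 0 = 0) (hkr : ∀ i, k' i + k'' i = r i + r (i+1))
    (β' : ∀ i, Fin (r' i) → (Fin (k' i) → ℂ))
    (γ' : ∀ i, Fin (r' (i+1)) → (Fin (k' i) → ℂ))
    (β'' : ∀ i, Fin (r'' i) → (Fin (k'' i) → ℂ))
    (γ'' : ∀ i, Fin (r'' (i+1)) → (Fin (k'' i) → ℂ))
    (β : ∀ i, Fin (r i) → (Fin (k' i + k'' i) → ℂ))
    (γ : ∀ i, Fin (r (i+1)) → (Fin (k' i + k'' i) → ℂ))
    (hβli' : ∀ i, LinearIndependent ℂ (β' i))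
    (hβli'' : ∀ i, LinearIndependent ℂ (β'' i))
    (hβli : ∀ i, LinearIndependent ℂ (β i))
    (hβ' : ∀ i, Submodule.span ℂ (Set.range (β' (i+1))) = LinearMap.range (d' i))
    (hβ'' : ∀ i, Submodule.span ℂ (Set.range (β'' (i+1))) = LinearMap.range (d'' i))
    (hβ : ∀ i, Submodule.span ℂ (Set.range (β (i+1))) = LinearMap.range (d i))
    (hγ' : ∀ i j, d' i (γ' i j) = β' (i+1) j)
    (hγ'' : ∀ i j, d'' i (γ'' i j) = β'' (i+1) j)
    (hγ : ∀ i j, d i (γ i j) = β (i+1) j) :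
    ∃ s : ℂ, (s = 1 ∨ s = -1) ∧
      (∏ i ∈ Finset.range (n+1),
        (Matrix.det (Matrix.of fun a b : Fin (k' i + k'' i) =>
          Sum.elim (fun j => β i j a) (fun j => γ i j a)
            (finSumFinEquiv.symm (finCongr (hkr i) b)))) ^ ((-1:ℤ)^i))
      = s *
      (∏ i ∈ Finset.range (n+1),
        (Matrix.det (Matrix.of fun a b : Fin (k' i) =>
          Sum.elim (fun j => β' i j a) (fun j => γ' i j a)
            (finSumFinEquiv.symm (finCongr (hkr' i) b)))) ^ ((-1:ℤ)^i)) *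
      (∏ i ∈ Finset.range (n+1),
        (Matrix.det (Matrix.of fun a b : Fin (k'' i) =>
          Sum.elim (fun j => β'' i j a) (fun j => γ'' i j a)
            (finSumFinEquiv.symm (finCongr (hkr'' i) b)))) ^ ((-1:ℤ)^i)) := by
  classical
  have hk1 : k' (n+1) + k'' (n+1) = 0 := by
    have h1 := hk'n (n+1) (by omega)
    have h2 := hk''n (n+1) (by omega)
    omega
  have hrr : ∀ i, r i = r' i + r'' i := by
    intro i
    induction i with
    | zero => omega
    | succ m ih =>
      have h1 := hkr m
      have h2 := hkr' m
      have h3 := hkr'' m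
      omega
  -- key property of the lift columns
  have hLr : ∀ i (j : Fin (r'' i)) y,
      Lc k' k'' r'' d γ'' i j (finSumFinEquiv (Sum.inr y)) = β'' i j y := by
    intro i
    match i with
    | 0 => exact fun j => absurd j.isLt (by omega)
    | (m+1) =>
      intro j y
      show d m (sec (γ'' m j)) (finSumFinEquiv (Sum.inr y)) = _
      rw [hquot m (sec (γ'' m j)) y]
      have hs : (fun x => sec (a := k' m) (γ'' m j) (finSumFinEquiv (Sum.inr x))) = γ'' m j := by
        funext x; rw [sec_inr]
      rw [hs, hγ'' m j]
  -- linear independence of the constructed bases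
  have hliC : ∀ i, LinearIndependent ℂ (fun j : Fin (r i) =>
      Sum.elim (fun j' => inc (β' i j')) (Lc k' k'' r'' d γ'' i)
        (((finCongr (hrr i)).trans finSumFinEquiv.symm) j)) :=
    Bc_li k' k'' r r' r'' (Lc k' k'' r'' d γ'') hrr β' β'' hβli' hβli'' hLr
  -- span property of the constructed bases
  have hrk : ∀ i, Module.finrank ℂ (LinearMap.range (d i)) = r (i+1) :=
    rank_range (fun i => k' i + k'' i) r d hex0 hex hr0 hkr
  have hspC : ∀ i, Submodule.span ℂ (Set.range (fun j : Fin (r (i+1)) =>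
      Sum.elim (fun j' => inc (β' (i+1) j')) (Lc k' k'' r'' d γ'' (i+1))
        (((finCongr (hrr (i+1))).trans finSumFinEquiv.symm) j))) = LinearMap.range (d i) := by
    intro i
    apply span_eq_of _ _ (hliC (i+1)) _ (hrk i)
    intro j
    rcases hφ : ((finCongr (hrr (i+1))).trans finSumFinEquiv.symm) j with j' | j''
    · simp only [hφ, Sum.elim_inl]
      refine ⟨inc (γ' i j'), ?_⟩
      show d i (fun x => Sum.elim (γ' i j') 0 (finSumFinEquiv.symm x)) = _
      rw [hsub i (γ' i j'), hγ' i j']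
      rfl
    · simp only [hφ, Sum.elim_inr]
      exact ⟨sec (γ'' i j''), rfl⟩
  -- chain map property of the constructed lifts
  have hGd : ∀ i (j : Fin (r (i+1))),
      d i (Sum.elim (fun j' => inc (γ' i j')) (fun j'' => sec (γ'' i j''))
        (((finCongr (hrr (i+1))).trans finSumFinEquiv.symm) j))
      = Sum.elim (fun j' => inc (β' (i+1) j')) (Lc k' k'' r'' d γ'' (i+1))
        (((finCongr (hrr (i+1))).trans finSumFinEquiv.symm) j) := by
    intro i j
    rcases hφ : ((finCongr (hrr (i+1))).trans finSumFinEquiv.symm) j with j' | j''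
    · simp only [hφ, Sum.elim_inl]
      show d i (fun x => Sum.elim (γ' i j') 0 (finSumFinEquiv.symm x)) = _
      rw [hsub i (γ' i j'), hγ' i j']
      rfl
    · simp only [hφ, Sum.elim_inr]
      rfl
  -- torsion is independent of the choice of bases
  have inv := invariance n (fun i => k' i + k'' i) r hk1 d hex0 hex hr0 hkr
    (fun i j => Sum.elim (fun j' => inc (β' i j')) (Lc k' k'' r'' d γ'' i)
      (((finCongr (hrr i)).trans finSumFinEquiv.symm) j))
    β
    (fun i j => Sum.elim (fun j' => inc (γ' i j')) (fun j'' => sec (γ'' i j''))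
      (((finCongr (hrr (i+1))).trans finSumFinEquiv.symm) j))
    γ hβli hspC hβ hGd hγ
  -- the level-wise determinant factorization
  have hlev : ∀ i, ∃ s : ℂ, (s = 1 ∨ s = -1) ∧
      (tmat (hkr i)
        (fun j => Sum.elim (fun j' => inc (β' i j')) (Lc k' k'' r'' d γ'' i)
          (((finCongr (hrr i)).trans finSumFinEquiv.symm) j))
        (fun j => Sum.elim (fun j' => inc (γ' i j')) (fun j'' => sec (γ'' i j''))
          (((finCongr (hrr (i+1))).trans finSumFinEquiv.symm) j))).det
      = s * ((tmat (hkr' i) (β' i) (γ' i)).det * (tmat (hkr'' i) (β'' i) (γ'' i)).det) :=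
    fun i => det_level (hkr' i) (hkr'' i) (hkr i) (hrr i) (hrr (i+1))
      (β' i) (γ' i) (β'' i) (γ'' i) (Lc k' k'' r'' d γ'' i) (hLr i)
  choose sg hsg1 hsgE using hlev
  refine ⟨∏ i ∈ Finset.range (n+1), sg i ^ ((-1:ℤ)^i), ?_, ?_⟩
  · exact Finset.prod_induction _ (fun x => x = 1 ∨ x = -1)
      (by rintro x y (rfl | rfl) (rfl | rfl) <;> simp) (Or.inl rfl)
      (fun i _ => pm_zpow (hsg1 i) _)
  · show (∏ i ∈ Finset.range (n+1), (tmat (hkr i) (β i) (γ i)).det ^ ((-1:ℤ)^i))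
      = (∏ i ∈ Finset.range (n+1), sg i ^ ((-1:ℤ)^i))
        * (∏ i ∈ Finset.range (n+1), (tmat (hkr' i) (β' i) (γ' i)).det ^ ((-1:ℤ)^i))
        * (∏ i ∈ Finset.range (n+1), (tmat (hkr'' i) (β'' i) (γ'' i)).det ^ ((-1:ℤ)^i))
    calc (∏ i ∈ Finset.range (n+1), (tmat (hkr i) (β i) (γ i)).det ^ ((-1:ℤ)^i))
        = ∏ i ∈ Finset.range (n+1), (tmat (hkr i)
            (fun j => Sum.elim (fun j' => inc (β' i j')) (Lc k' k'' r'' d γ'' i)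
              (((finCongr (hrr i)).trans finSumFinEquiv.symm) j))
            (fun j => Sum.elim (fun j' => inc (γ' i j')) (fun j'' => sec (γ'' i j''))
              (((finCongr (hrr (i+1))).trans finSumFinEquiv.symm) j))).det ^ ((-1:ℤ)^i) := inv
      _ = ∏ i ∈ Finset.range (n+1), (sg i ^ ((-1:ℤ)^i)
            * ((tmat (hkr' i) (β' i) (γ' i)).det ^ ((-1:ℤ)^i)
              * (tmat (hkr'' i) (β'' i) (γ'' i)).det ^ ((-1:ℤ)^i))) := by
          refine Finset.prod_congr rfl fun i _ => ?_
          rw [hsgE i, mul_zpow, mul_zpow]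
      _ = (∏ i ∈ Finset.range (n+1), sg i ^ ((-1:ℤ)^i))
            * ((∏ i ∈ Finset.range (n+1), (tmat (hkr' i) (β' i) (γ' i)).det ^ ((-1:ℤ)^i))
              * (∏ i ∈ Finset.range (n+1), (tmat (hkr'' i) (β'' i) (γ'' i)).det ^ ((-1:ℤ)^i))) := by
          rw [Finset.prod_mul_distrib, Finset.prod_mul_distrib]
      _ = _ := by ring
end
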